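/- Let N be a Petri net whose T_I-induced subnet is acyclic and conflict-free, and let M_b be a marking of N. If σ_1 and σ_2 are two sequences in T_I* firable at M_b with firing vectors y_1 ≠ y_2, and neither firing vector can be strictly extended (both maximal), then a contradiction arises: i.e., the set of firing vectors of implicit sequences firable at M_b has at most one maximal element. -/

import Mathlib

/-- A Petri net with `m` places and `n` transitions. -/
structure PetriNet (m n : ℕ) where
  Pre : Fin m → Fin n → ℕ
  Post : Fin m → Fin n → ℕ

namespace PetriNet

variable {m n : ℕ}

/-- Incidence matrix `C = Post - Pre`. -/
def C (N : PetriNet m n) (p : Fin m) (t : Fin n) : ℤ :=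
  (N.Post p t : ℤ) - (N.Pre p t : ℤ)

/-- Transition `t` is enabled at marking `M`. -/
def enabled (N : PetriNet m n) (M : Fin m → ℕ) (t : Fin n) : Prop :=
  ∀ p, N.Pre p t ≤ M p

/-- Firing transition `t` at marking `M`. -/
def fire (N : PetriNet m n) (M : Fin m → ℕ) (t : Fin n) : Fin m → ℕ :=
  fun p => M p + N.Post p t - N.Pre p t

/-- `fires N M σ M'` : the sequence `σ` is firable at `M` and yields `M'`. -/
inductive fires (N : PetriNet m n) : (Fin m → ℕ) → List (Fin n) → (Fin m → ℕ) → Prop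
  | nil (M : Fin m → ℕ) : fires N M [] M
  | cons {M M' : Fin m → ℕ} {t : Fin n} {σ : List (Fin n)} :
      N.enabled M t → fires N (N.fire M t) σ M' → fires N M (t :: σ) M'

/-- Firing vector of a sequence. -/
def fvec (σ : List (Fin n)) : Fin n → ℕ := fun t => σ.count t

/-- Arcs of the subnet induced by transition set `TI` (full net for `TI = Set.univ`). -/
def arc (N : PetriNet m n) (TI : Set (Fin n)) :
    (Fin m ⊕ Fin n) → (Fin m ⊕ Fin n) → Prop
  | Sum.inl p, Sum.inr t => t ∈ TI ∧ 0 < N.Pre p t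
  | Sum.inr t, Sum.inl p => t ∈ TI ∧ 0 < N.Post p t
  | _, _ => False

/-- The subnet induced by `TI` is acyclic: no directed cycle. -/
def SubnetAcyclic (N : PetriNet m n) (TI : Set (Fin n)) : Prop :=
  ∀ x, ¬ Relation.TransGen (N.arc TI) x x

/-- Transitions in structural conflict. -/
def Tconf (N : PetriNet m n) : Set (Fin n) :=
  {t | ∃ p, 0 < N.Pre p t ∧ ∃ t', t' ≠ t ∧ 0 < N.Pre p t'}

/-- `TI` is non-conflicting: `TI ⊆ T \ T_conf`. -/
def NonConflicting (N : PetriNet m n) (TI : Set (Fin n)) : Prop :=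
  ∀ t ∈ TI, t ∉ N.Tconf

/-- `TI` is non-increasing w.r.t. the GMEC weight vector `w`. -/
def NonIncreasing (N : PetriNet m n) (w : Fin m → ℤ) (TI : Set (Fin n)) : Prop :=
  ∀ t ∈ TI, ∑ p, w p * N.C p t ≤ 0

/-- The `TI`-induced subnet is conflict-free: every place has at most one
output transition among `TI`. -/
def ConflictFreeSubnet (N : PetriNet m n) (TI : Set (Fin n)) : Prop :=
  ∀ p : Fin m, ∀ t ∈ TI, ∀ t' ∈ TI, 0 < N.Pre p t → 0 < N.Pre p t' → t = t'

/-- `σ` consists only of transitions in `TI`. -/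
def ImplicitSeq (TI : Set (Fin n)) (σ : List (Fin n)) : Prop := ∀ t ∈ σ, t ∈ TI

/-- Implicit reach of a marking `Mb`. -/
def RI (N : PetriNet m n) (TI : Set (Fin n)) (Mb : Fin m → ℕ) : Set (Fin m → ℕ) :=
  {M | ∃ σ, ImplicitSeq TI σ ∧ N.fires Mb σ M}

/-- Reachability set. -/
def Reach (N : PetriNet m n) (M0 : Fin m → ℕ) : Set (Fin m → ℕ) :=
  {M | ∃ σ, N.fires M0 σ M}

/-- State equation `M' = M + C·y` (the nonnegativity `M' ≥ 0` is implicit in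
`M' : Fin m → ℕ`). -/
def stateEq (N : PetriNet m n) (M : Fin m → ℕ) (y : Fin n → ℕ) (M' : Fin m → ℕ) : Prop :=
  ∀ p, (M' p : ℤ) = (M p : ℤ) + ∑ t, N.C p t * (y t : ℤ)

/-- `σ` is an explanation of `t` at `M`: an implicit sequence after which `t`
is enabled. -/
def IsExplanation (N : PetriNet m n) (TI : Set (Fin n)) (M : Fin m → ℕ)
    (t : Fin n) (σ : List (Fin n)) : Prop :=
  ImplicitSeq TI σ ∧ ∃ M', N.fires M σ M' ∧ N.enabled M' t

/-- `y` is a minimal explanation vector of `t` at `M`. -/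
def MinExplVec (N : PetriNet m n) (TI : Set (Fin n)) (M : Fin m → ℕ)
    (t : Fin n) (y : Fin n → ℕ) : Prop :=
  (∃ σ, N.IsExplanation TI M t σ ∧ fvec σ = y) ∧
    ∀ σ', N.IsExplanation TI M t σ' → ¬ fvec σ' < y

/-- `y` is the firing vector of some implicit sequence firable at `M`. -/
def FirableVec (N : PetriNet m n) (TI : Set (Fin n)) (M : Fin m → ℕ)
    (y : Fin n → ℕ) : Prop :=
  ∃ σ M', ImplicitSeq TI σ ∧ fvec σ = y ∧ N.fires M σ M'

/-- `y` is a maximal implicit firing vector at `M`. -/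
def MaximalIFV (N : PetriNet m n) (TI : Set (Fin n)) (M : Fin m → ℕ)
    (y : Fin n → ℕ) : Prop :=
  N.FirableVec TI M y ∧ ∀ y', N.FirableVec TI M y' → ¬ y < y'

/-- `y` is the maximal implicit firing vector at `M`, dominating all others. -/
def GreatestIFV (N : PetriNet m n) (TI : Set (Fin n)) (M : Fin m → ℕ)
    (y : Fin n → ℕ) : Prop :=
  N.FirableVec TI M y ∧ ∀ y', N.FirableVec TI M y' → y' ≤ y

/-- One step of the BRG: fire a minimal explanation followed by an explicit
transition `t ∉ TI`. -/
def BRGstep (N : PetriNet m n) (TI : Set (Fin n)) (M1 M2 : Fin m → ℕ) : Prop :=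
  ∃ t ∉ TI, ∃ y, N.MinExplVec TI M1 t y ∧
    ∀ p, (M2 p : ℤ) = (M1 p : ℤ) + (∑ s, N.C p s * (y s : ℤ)) + N.C p t

/-- `Mb` is a basis marking of the BRG with initial marking `M0`. -/
def Basis (N : PetriNet m n) (TI : Set (Fin n)) (M0 Mb : Fin m → ℕ) : Prop :=
  Relation.ReflTransGen (N.BRGstep TI) M0 Mb

/-- A marking is dead if it enables no transition. -/
def Dead (N : PetriNet m n) (M : Fin m → ℕ) : Prop := ∀ t, ¬ N.enabled M t

/-- Final markings of the GMEC `(w, k)`. -/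
def Final (w : Fin m → ℤ) (k : ℤ) (M : Fin m → ℕ) : Prop :=
  ∑ p, w p * (M p : ℤ) ≤ k

/-- The plant is non-blocking. -/
def NonBlocking (N : PetriNet m n) (M0 : Fin m → ℕ) (w : Fin m → ℤ) (k : ℤ) : Prop :=
  ∀ M ∈ N.Reach M0, ∃ M' ∈ N.Reach M, Final w k M'

/-- Boundedness of the marked net. -/
def Bounded (N : PetriNet m n) (M0 : Fin m → ℕ) : Prop :=
  ∃ K, ∀ M ∈ N.Reach M0, ∀ p, M p ≤ K

end PetriNet

open PetriNet

namespace PetriNet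

variable {m n : ℕ}

lemma exch {N : PetriNet m n} {TI : Set (Fin n)} (hcf : N.ConflictFreeSubnet TI)
    {t s : Fin n} (ht : t ∈ TI) (hs : s ∈ TI) (hne : t ≠ s) {M : Fin m → ℕ}
    (het : N.enabled M t) : N.enabled (N.fire M s) t := by
  intro p
  by_cases h : 0 < N.Pre p t
  · have hps : N.Pre p s = 0 := by
      by_contra hc
      exact hne (hcf p t ht s hs h (Nat.pos_of_ne_zero hc))
    have := het p
    simp only [fire, hps]
    omega
  · have : N.Pre p t = 0 := by omega
    simp [this]

lemma fire_comm {N : PetriNet m n} {t s : Fin n} {M : Fin m → ℕ}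
    (het : N.enabled M t) (hes : N.enabled M s)
    (het' : N.enabled (N.fire M s) t) (hes' : N.enabled (N.fire M t) s) :
    N.fire (N.fire M t) s = N.fire (N.fire M s) t := by
  funext p
  have h1 := het p; have h2 := hes p
  have h3 := het' p; have h4 := hes' p
  simp only [fire] at *
  omega

/-- Move an enabled transition `t` occurring in `σ` to the front. -/
lemma front {N : PetriNet m n} {TI : Set (Fin n)} (hcf : N.ConflictFreeSubnet TI) :
    ∀ σ : List (Fin n), ImplicitSeq TI σ → ∀ M M'' : Fin m → ℕ,
      N.fires M σ M'' → ∀ t ∈ TI, N.enabled M t → t ∈ σ →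
      N.fires M (t :: σ.erase t) M'' := by
  intro σ
  induction σ with
  | nil => intro _ _ _ _ _ _ _ hmem; simp at hmem
  | cons s σ' ih =>
    intro himp M M'' hfires t ht het hmem
    cases hfires with
    | cons hes hrest =>
      by_cases hst : s = t
      · subst hst
        simpa [List.erase_cons_head] using fires.cons hes hrest
      · have hne : t ≠ s := fun h => hst h.symm
        have hsTI : s ∈ TI := himp s (by simp)
        have hmem' : t ∈ σ' := by
          rcases List.mem_cons.mp hmem with h | h
          · exact absurd h.symm hst
          · exact h
        have het2 : N.enabled (N.fire M s) t := exch hcf ht hsTI hne het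
        have hes2 : N.enabled (N.fire M t) s := exch hcf hsTI ht (Ne.symm hne) hes
        have himp' : ImplicitSeq TI σ' := fun u hu => himp u (by simp [hu])
        have h1 := ih himp' (N.fire M s) M'' hrest t ht het2 hmem'
        cases h1 with
        | cons het2' hrest2 =>
          have hcomm := fire_comm het hes het2 hes2
          rw [← hcomm] at hrest2
          have : (s :: σ').erase t = s :: σ'.erase t := by
            rw [List.erase_cons_tail]
            simp [hst]
          rw [this]
          exact fires.cons het (fires.cons hes2 hrest2)

/-- Firing an extra enabled transition not in `σ` keeps `σ` firable. -/
lemma shift {N : PetriNet m n} {TI : Set (Fin n)} (hcf : N.ConflictFreeSubnet TI) :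
    ∀ σ : List (Fin n), ImplicitSeq TI σ → ∀ M M'' : Fin m → ℕ,
      N.fires M σ M'' → ∀ t ∈ TI, N.enabled M t → t ∉ σ →
      ∃ M₂, N.fires (N.fire M t) σ M₂ := by
  intro σ
  induction σ with
  | nil => intro _ M _ _ t _ _ _; exact ⟨N.fire M t, fires.nil _⟩
  | cons s σ' ih =>
    intro himp M M'' hfires t ht het hmem
    cases hfires with
    | cons hes hrest =>
      have hne : t ≠ s := fun h => hmem (by simp [h])
      have hsTI : s ∈ TI := himp s (by simp)
      have het2 : N.enabled (N.fire M s) t := exch hcf ht hsTI hne het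
      have hes2 : N.enabled (N.fire M t) s := exch hcf hsTI ht (Ne.symm hne) hes
      have himp' : ImplicitSeq TI σ' := fun u hu => himp u (by simp [hu])
      have hmem' : t ∉ σ' := fun h => hmem (by simp [h])
      obtain ⟨M₂, hf⟩ := ih himp' (N.fire M s) M'' hrest t ht het2 hmem'
      have hcomm := fire_comm het hes het2 hes2
      rw [← hcomm] at hf
      exact ⟨M₂, fires.cons hes2 hf⟩

/-- Keller's merge: the pointwise max of two firable vectors is firable. -/
lemma merge {N : PetriNet m n} {TI : Set (Fin n)} (hcf : N.ConflictFreeSubnet TI) :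
    ∀ σ₁ : List (Fin n), ImplicitSeq TI σ₁ → ∀ σ₂ : List (Fin n), ImplicitSeq TI σ₂ →
      ∀ M M₁ M₂ : Fin m → ℕ, N.fires M σ₁ M₁ → N.fires M σ₂ M₂ →
      ∃ σ M', ImplicitSeq TI σ ∧ N.fires M σ M' ∧
        ∀ s, σ.count s = max (σ₁.count s) (σ₂.count s) := by
  intro σ₁
  induction σ₁ with
  | nil =>
    intro _ σ₂ himp₂ M M₁ M₂ _ hf₂
    exact ⟨σ₂, M₂, himp₂, hf₂, fun s => by simp⟩
  | cons t σ₁' ih =>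
    intro himp₁ σ₂ himp₂ M M₁ M₂ hf₁ hf₂
    have htTI : t ∈ TI := himp₁ t (by simp)
    have himp₁' : ImplicitSeq TI σ₁' := fun u hu => himp₁ u (by simp [hu])
    cases hf₁ with
    | cons het hrest₁ =>
      by_cases hmem : t ∈ σ₂
      · have hfront := front hcf σ₂ himp₂ M M₂ hf₂ t htTI het hmem
        cases hfront with
        | cons _ hrest₂ =>
          have himpe : ImplicitSeq TI (σ₂.erase t) :=
            fun u hu => himp₂ u (List.mem_of_mem_erase hu)
          obtain ⟨σ, M', himpσ, hfσ, hcount⟩ :=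
            ih himp₁' (σ₂.erase t) himpe (N.fire M t) M₁ M₂ hrest₁ hrest₂
          refine ⟨t :: σ, M', fun u hu => ?_, fires.cons het hfσ, fun s => ?_⟩
          · rcases List.mem_cons.mp hu with h | h
            · exact h ▸ htTI
            · exact himpσ u h
          · have hc := hcount s
            have hpos : 1 ≤ σ₂.count t := List.count_pos_iff.mpr hmem
            by_cases hs : s = t
            · subst hs
              rw [List.count_cons_self, hc, List.count_cons_self,
                List.count_erase_self]
              omega
            · rw [List.count_cons_of_ne (Ne.symm hs), hc, List.count_cons_of_ne (Ne.symm hs),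
                List.count_erase_of_ne hs]
      · obtain ⟨M₂', hf₂'⟩ := shift hcf σ₂ himp₂ M M₂ hf₂ t htTI het hmem
        obtain ⟨σ, M', himpσ, hfσ, hcount⟩ :=
          ih himp₁' σ₂ himp₂ (N.fire M t) M₁ M₂' hrest₁ hf₂'
        refine ⟨t :: σ, M', fun u hu => ?_, fires.cons het hfσ, fun s => ?_⟩
        · rcases List.mem_cons.mp hu with h | h
          · exact h ▸ htTI
          · exact himpσ u h
        · have hc := hcount s
          have hzero : σ₂.count t = 0 := List.count_eq_zero_of_not_mem hmem
          by_cases hs : s = t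
          · subst hs
            rw [List.count_cons_self, hc, List.count_cons_self]
            omega
          · rw [List.count_cons_of_ne (Ne.symm hs), hc, List.count_cons_of_ne (Ne.symm hs)]

end PetriNet

/-- in an acyclic conflict-free subnet, the set of implicit
firing vectors firable at a marking has at most one maximal element. -/
theorem at_most_one_maximal_ifv {m n : ℕ} (N : PetriNet m n) (TI : Set (Fin n))
    (hacyc : N.SubnetAcyclic TI) (hcf : N.ConflictFreeSubnet TI)
    (Mb : Fin m → ℕ) (y₁ y₂ : Fin n → ℕ)
    (h₁ : N.MaximalIFV TI Mb y₁) (h₂ : N.MaximalIFV TI Mb y₂) :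
    y₁ = y₂ := by
  obtain ⟨⟨σ₁, M₁, himp₁, hv₁, hf₁⟩, hmax₁⟩ := h₁
  obtain ⟨⟨σ₂, M₂, himp₂, hv₂, hf₂⟩, hmax₂⟩ := h₂
  obtain ⟨σ, M', himpσ, hfσ, hcount⟩ :=
    PetriNet.merge hcf σ₁ himp₁ σ₂ himp₂ Mb M₁ M₂ hf₁ hf₂
  set y : Fin n → ℕ := fun t => max (y₁ t) (y₂ t) with hy
  have hfv : N.FirableVec TI Mb y := by
    refine ⟨σ, M', himpσ, ?_, hfσ⟩
    funext s
    have h1 := congrFun hv₁ s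
    have h2 := congrFun hv₂ s
    simp only [fvec] at h1 h2 ⊢
    rw [hcount s, h1, h2]
  have hle₁ : y₁ ≤ y := fun t => le_max_left _ _
  have hle₂ : y₂ ≤ y := fun t => le_max_right _ _
  have he₁ : y₁ = y := by
    by_contra hne
    exact hmax₁ y hfv (lt_of_le_of_ne hle₁ hne)
  have he₂ : y₂ = y := by
    by_contra hne
    exact hmax₂ y hfv (lt_of_le_of_ne hle₂ hne)
  rw [he₁, he₂]
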